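/- Let π : E → M be a vector bundle and Y a projectable vector field on E (Tπ ∘ Y = X ∘ π for some vector field X on M) with local flow φ_s. Then the fibre derivative FY is a linear vector field on the pullback bundle π*E → E whose local flow is Fφ_s, the fibre derivative of φ_s. -/

import Mathlib

/- STATEMENT 14: the fibre derivative `FY` of a projectable vector field `Y` is a linear
vector field on the pullback bundle `π^*E → E`, whose local flow is the fibre
derivative `Fφ_s` of the local flow `φ_s` of `Y`.
Local model: `E = M × V`, `π^*E ≅ M × V × V`; a vector field on `E` is a map
`Y : M × V → M × V` (values in the model space), projectable when its first
component only depends on the base point. -/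

section FD
variable {M V : Type*} [NormedAddCommGroup M] [NormedSpace ℝ M]
  [NormedAddCommGroup V] [NormedSpace ℝ V]

/-- The fibre derivative of a map `E → E` (e.g. a flow map or a vector field),
`Fφ(a,b) = (φ(a), ν(Tφ(ξ^∨_π(a,b))))` in the local model. -/
noncomputable def fibreDerivSelf (φ : M × V → M × V) : M × V × V → M × V × V :=
  fun p => ((φ (p.1, p.2.1)).1, (φ (p.1, p.2.1)).2,
    deriv (fun s : ℝ => (φ (p.1, p.2.1 + s • p.2.2)).2) 0)

open Set

/-- Grönwall: a solution of a linear ODE-type inequality vanishing at `0` vanishes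
for all nonnegative times. -/
lemma aux_gronwall_zero_nonneg {E : Type*} [NormedAddCommGroup E] [NormedSpace ℝ E]
    (w : ℝ → E) (A : ℝ → E) (κ : ℝ → ℝ) (hκ : Continuous κ)
    (hw : ∀ s, HasDerivAt w (A s) s) (hA : ∀ s, ‖A s‖ ≤ κ s * ‖w s‖)
    (h0 : w 0 = 0) (t : ℝ) (ht : 0 ≤ t) : w t = 0 := by
  obtain ⟨s₀, hs₀, hmax⟩ := isCompact_Icc.exists_isMaxOn ⟨0, left_mem_Icc.2 ht⟩
    (hκ.continuousOn (s := Icc 0 t))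
  have hwc : Continuous w := continuous_iff_continuousAt.2 fun x => (hw x).continuousAt
  have key := norm_le_gronwallBound_of_norm_deriv_right_le (f := w) (f' := A)
    (δ := 0) (K := κ s₀) (ε := 0) (a := 0) (b := t) hwc.continuousOn
    (fun x _ => (hw x).hasDerivWithinAt) (by simp [h0])
    (fun x hx => by
      have h1 : ‖A x‖ ≤ κ x * ‖w x‖ := hA x
      have h2 : κ x * ‖w x‖ ≤ κ s₀ * ‖w x‖ :=
        mul_le_mul_of_nonneg_right (hmax ⟨hx.1, hx.2.le⟩) (norm_nonneg _)
      linarith)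
  have := key t (right_mem_Icc.2 ht)
  rw [gronwallBound_ε0_δ0] at this
  exact norm_le_zero_iff.1 this

/-- Grönwall: a solution of a linear ODE-type inequality vanishing at `0` vanishes
for all times. -/
lemma aux_gronwall_zero {E : Type*} [NormedAddCommGroup E] [NormedSpace ℝ E]
    (w : ℝ → E) (A : ℝ → E) (κ : ℝ → ℝ) (hκ : Continuous κ)
    (hw : ∀ s, HasDerivAt w (A s) s) (hA : ∀ s, ‖A s‖ ≤ κ s * ‖w s‖)
    (h0 : w 0 = 0) (t : ℝ) : w t = 0 := by
  rcases le_total 0 t with ht | ht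
  · exact aux_gronwall_zero_nonneg w A κ hκ hw hA h0 t ht
  · have := aux_gronwall_zero_nonneg (fun s => w (-s)) (fun s => -A (-s))
      (fun s => κ (-s)) (hκ.comp continuous_neg)
      (fun s => by
        have h := (hw (-s)).scomp s (hasDerivAt_neg s)
        simpa [Function.comp_def] using h)
      (fun s => by simpa using hA (-s)) (by simpa using h0) (-t) (by linarith)
    simpa using this

/-- The fibre-derivative component of a vector field is the second component of its
full derivative in a vertical direction. -/
lemma aux_line_deriv (Y : M × V → M × V) (hY : Differentiable ℝ Y) (m : M) (y z : V) :
    deriv (fun s : ℝ => (Y (m, y + s • z)).2) 0 = (fderiv ℝ Y (m, y) ((0 : M), z)).2 := by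
  have hline : HasDerivAt (fun s : ℝ => ((m, y + s • z) : M × V)) ((0 : M), z) 0 := by
    have h1 : HasDerivAt (fun s : ℝ => y + s • z) z 0 := by
      simpa using ((hasDerivAt_id (0 : ℝ)).smul_const z).const_add y
    exact HasDerivAt.prodMk (hasDerivAt_const (0 : ℝ) m) h1
  have hcomp := ((hY ((m, y + (0 : ℝ) • z))).hasFDerivAt).comp_hasDerivAt 0 hline
  simp only [zero_smul, add_zero] at hcomp
  have h2 := ((ContinuousLinearMap.snd ℝ M V).hasFDerivAt).comp_hasDerivAt 0 hcomp
  exact h2.deriv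

/-- for a smooth projectable vector field `Y` with local flow `φ`,
the fibre derivative `FY` is a linear vector field on `π^*E` and its local flow
is `Fφ_s`. -/
theorem fibreDeriv_vectorField_linear_and_flow
    (Y : M × V → M × V) (hY : ContDiff ℝ (⊤ : ℕ∞) Y)
    (X : M → M) (hproj : ∀ p : M × V, (Y p).1 = X p.1)
    (φ : ℝ → M × V → M × V)
    (hφ : ContDiff ℝ (⊤ : ℕ∞) (fun q : ℝ × (M × V) => φ q.1 q.2))
    (hφ0 : φ 0 = id)
    (hflow : ∀ (t : ℝ) (p : M × V), HasDerivAt (fun s => φ s p) (Y (φ t p)) t) :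
    (∀ (m : M) (y : V),
      IsLinearMap ℝ (fun z : V => (fibreDerivSelf Y (m, y, z)).2.2)) ∧
    (∀ (t : ℝ) (p : M × V × V),
      HasDerivAt (fun s => fibreDerivSelf (φ s) p)
        (fibreDerivSelf Y (fibreDerivSelf (φ t) p)) t) := by
  have hYd : Differentiable ℝ Y := hY.differentiable (by simp)
  constructor
  · -- linearity
    intro m y
    have heq : (fun z : V => (fibreDerivSelf Y (m, y, z)).2.2)
        = fun z : V => (fderiv ℝ Y (m, y) ((0 : M), z)).2 := by
      funext z
      exact aux_line_deriv Y hYd m y z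
    rw [heq]
    constructor
    · intro z z'
      have : ((0 : M), z + z') = (((0 : M), z) : M × V) + ((0 : M), z') := by simp
      rw [this, map_add]; rfl
    · intro c z
      have : ((0 : M), c • z) = c • (((0 : M), z) : M × V) := by simp
      rw [this, map_smul]; rfl
  · -- flow
    intro t p
    obtain ⟨a, b, v⟩ := p
    set F : ℝ × ℝ → M × V := fun q => φ q.1 (a, b + q.2 • v) with hFdef
    have hF : ContDiff ℝ (⊤ : ℕ∞) F :=
      hφ.comp (contDiff_fst.prodMk (contDiff_const.prodMk
        (contDiff_const.add (contDiff_snd.smul contDiff_const))))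
    have hFd : Differentiable ℝ F := hF.differentiable (by simp)
    set DF := fderiv ℝ F with hDFdef
    have hDF : ContDiff ℝ (⊤ : ℕ∞) DF := hF.fderiv_right (by exact_mod_cast le_top)
    have hFdAt : ∀ q, HasFDerivAt F (DF q) q := fun q => (hFd q).hasFDerivAt
    -- partial derivative in s
    have hcurve_s : ∀ q : ℝ × ℝ, HasDerivAt (fun s => F (s, q.2)) (DF q ((1 : ℝ), (0 : ℝ))) q.1 := by
      intro q
      have hl : HasDerivAt (fun s : ℝ => ((s, q.2) : ℝ × ℝ)) ((1 : ℝ), (0 : ℝ)) q.1 :=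
        HasDerivAt.prodMk (hasDerivAt_id q.1) (hasDerivAt_const q.1 q.2)
      have h := (hFdAt (q.1, q.2)).comp_hasDerivAt q.1 hl
      simpa [Function.comp_def] using h
    have hDs : ∀ q : ℝ × ℝ, DF q ((1 : ℝ), (0 : ℝ)) = Y (F q) := by
      intro q
      have h2 : HasDerivAt (fun s => F (s, q.2)) (Y (F q)) q.1 := by
        have h := hflow q.1 (a, b + q.2 • v)
        simpa [hFdef] using h
      exact (hcurve_s q).unique h2
    -- partial derivative in r
    set G : ℝ × ℝ → M × V := fun q => DF q ((0 : ℝ), (1 : ℝ)) with hGdef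
    have hG : ContDiff ℝ (⊤ : ℕ∞) G := hDF.clm_apply contDiff_const
    have hcurve_r : ∀ q : ℝ × ℝ, HasDerivAt (fun r => F (q.1, r)) (G q) q.2 := by
      intro q
      have hl : HasDerivAt (fun r : ℝ => ((q.1, r) : ℝ × ℝ)) ((0 : ℝ), (1 : ℝ)) q.2 :=
        HasDerivAt.prodMk (hasDerivAt_const q.2 q.1) (hasDerivAt_id q.2)
      have h := (hFdAt (q.1, q.2)).comp_hasDerivAt q.2 hl
      simpa [Function.comp_def, hGdef] using h
    set H : ℝ → M × V := fun s => G (s, 0) with hHdef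
    -- initial condition
    have hH0 : H 0 = ((0 : M), v) := by
      have h1 := hcurve_r (0, 0)
      have h2 : HasDerivAt (fun r => F (0, r)) (((0 : M), v) : M × V) 0 := by
        have heq : (fun r : ℝ => F (0, r)) = fun r : ℝ => ((a, b + r • v) : M × V) := by
          funext r
          simp [hFdef, hφ0]
        rw [heq]
        have hv : HasDerivAt (fun r : ℝ => b + r • v) v 0 := by
          simpa using ((hasDerivAt_id (0 : ℝ)).smul_const v).const_add b
        exact HasDerivAt.prodMk (hasDerivAt_const (0 : ℝ) a) hv
      exact h1.unique h2
    -- the linearized flow equation, via symmetry of second derivatives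
    have hH' : ∀ s, HasDerivAt H (fderiv ℝ Y (F (s, 0)) (H s)) s := by
      intro s
      have hl : HasDerivAt (fun s' : ℝ => ((s', (0 : ℝ)) : ℝ × ℝ)) ((1 : ℝ), (0 : ℝ)) s :=
        HasDerivAt.prodMk (hasDerivAt_id s) (hasDerivAt_const s 0)
      have hstep : HasDerivAt H (fderiv ℝ G (s, 0) ((1 : ℝ), (0 : ℝ))) s := by
        have h := ((hG.differentiable (by simp) (s, 0)).hasFDerivAt).comp_hasDerivAt s hl
        simpa [Function.comp_def, hHdef] using h
      set D2 := fderiv ℝ DF (s, 0) with hD2def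
      have hD2 : HasFDerivAt DF D2 (s, 0) := (hDF.differentiable (by simp) (s, 0)).hasFDerivAt
      have hGfd : fderiv ℝ G (s, 0) ((1 : ℝ), (0 : ℝ)) = D2 ((1 : ℝ), (0 : ℝ)) ((0 : ℝ), (1 : ℝ)) := by
        have hGf : HasFDerivAt G (D2.flip ((0 : ℝ), (1 : ℝ))) (s, 0) := by
          have h := hD2.clm_apply (hasFDerivAt_const (((0 : ℝ), (1 : ℝ)) : ℝ × ℝ) ((s, 0) : ℝ × ℝ))
          simpa using h
        rw [hGf.fderiv]
        rfl
      have hsym : D2 ((1 : ℝ), (0 : ℝ)) ((0 : ℝ), (1 : ℝ))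
          = D2 ((0 : ℝ), (1 : ℝ)) ((1 : ℝ), (0 : ℝ)) :=
        second_derivative_symmetric hFdAt hD2 _ _
      have hKfd : D2 ((0 : ℝ), (1 : ℝ)) ((1 : ℝ), (0 : ℝ))
          = fderiv ℝ Y (F (s, 0)) (G (s, 0)) := by
        have hK : HasFDerivAt (fun x : ℝ × ℝ => DF x ((1 : ℝ), (0 : ℝ)))
            (D2.flip ((1 : ℝ), (0 : ℝ))) (s, 0) := by
          have h := hD2.clm_apply (hasFDerivAt_const (((1 : ℝ), (0 : ℝ)) : ℝ × ℝ) ((s, 0) : ℝ × ℝ))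
          simpa using h
        have hfun : (fun x : ℝ × ℝ => DF x ((1 : ℝ), (0 : ℝ))) = fun x => Y (F x) :=
          funext fun q => hDs q
        rw [hfun] at hK
        have hYF : HasFDerivAt (fun x => Y (F x))
            ((fderiv ℝ Y (F (s, 0))).comp (DF (s, 0))) (s, 0) :=
          (hYd (F (s, 0))).hasFDerivAt.comp (s, 0) (hFdAt (s, 0))
        have huniq := hK.unique hYF
        calc D2 ((0 : ℝ), (1 : ℝ)) ((1 : ℝ), (0 : ℝ))
            = D2.flip ((1 : ℝ), (0 : ℝ)) ((0 : ℝ), (1 : ℝ)) := rfl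
          _ = ((fderiv ℝ Y (F (s, 0))).comp (DF (s, 0))) ((0 : ℝ), (1 : ℝ)) := by rw [huniq]
          _ = fderiv ℝ Y (F (s, 0)) (G (s, 0)) := rfl
      have hval : fderiv ℝ G (s, 0) ((1 : ℝ), (0 : ℝ)) = fderiv ℝ Y (F (s, 0)) (H s) := by
        rw [hGfd, hsym, hKfd]
      rwa [hval] at hstep
    -- projectability: the first component of the derivative only sees the base
    set X' : M → M := fun m => (Y (m, 0)).1 with hX'def
    have hX' : ContDiff ℝ (⊤ : ℕ∞) X' :=
      contDiff_fst.comp (hY.comp (contDiff_id.prodMk contDiff_const))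
    have hfsteq : (fun p : M × V => (Y p).1) = fun p : M × V => X' p.1 := by
      funext q
      simp only [hX'def]
      rw [hproj q, hproj (q.1, 0)]
    have hfderiv_fst : ∀ (q : M × V) (u : M × V),
        (fderiv ℝ Y q u).1 = fderiv ℝ X' q.1 u.1 := by
      intro q u
      have h1 : HasFDerivAt (fun p : M × V => (Y p).1)
          ((ContinuousLinearMap.fst ℝ M V).comp (fderiv ℝ Y q)) q :=
        (ContinuousLinearMap.fst ℝ M V).hasFDerivAt.comp q (hYd q).hasFDerivAt
      have h2 : HasFDerivAt (fun p : M × V => X' p.1)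
          ((fderiv ℝ X' q.1).comp (ContinuousLinearMap.fst ℝ M V)) q :=
        ((hX'.differentiable (by simp) q.1).hasFDerivAt).comp q
          (ContinuousLinearMap.fst ℝ M V).hasFDerivAt
      rw [hfsteq] at h1
      have huniq := h1.unique h2
      calc (fderiv ℝ Y q u).1
          = ((ContinuousLinearMap.fst ℝ M V).comp (fderiv ℝ Y q)) u := rfl
        _ = ((fderiv ℝ X' q.1).comp (ContinuousLinearMap.fst ℝ M V)) u := by rw [huniq]
        _ = fderiv ℝ X' q.1 u.1 := rfl
    -- Grönwall: the base component of H vanishes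
    set w : ℝ → M := fun s => (H s).1 with hwdef
    have hw : ∀ s, HasDerivAt w (fderiv ℝ X' ((F (s, 0)).1) (w s)) s := by
      intro s
      have h := ((ContinuousLinearMap.fst ℝ M V).hasFDerivAt).comp_hasDerivAt s (hH' s)
      have hv : (fderiv ℝ Y (F (s, 0)) (H s)).1 = fderiv ℝ X' ((F (s, 0)).1) (w s) :=
        hfderiv_fst (F (s, 0)) (H s)
      simpa [Function.comp_def, hwdef, hv] using h
    have hκc : Continuous fun s : ℝ => ‖fderiv ℝ X' ((F (s, 0)).1)‖ := by
      have h1 : Continuous (fderiv ℝ X') := hX'.continuous_fderiv (by simp)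
      have h2 : Continuous fun s : ℝ => (F (s, 0)).1 :=
        (hF.continuous.comp (continuous_id.prodMk continuous_const)).fst
      exact (h1.comp h2).norm
    have hwt : w t = 0 := by
      refine aux_gronwall_zero w (fun s => fderiv ℝ X' ((F (s, 0)).1) (w s))
        (fun s => ‖fderiv ℝ X' ((F (s, 0)).1)‖) hκc hw
        (fun s => ContinuousLinearMap.le_opNorm _ _) ?_ t
      simp [hwdef, hH0]
    have hHt : H t = ((0 : M), (H t).2) := Prod.ext hwt rfl
    -- the third component of the fibre derivative of the flow is `(H s).2`
    have hthird : ∀ s : ℝ, deriv (fun r : ℝ => (φ s (a, b + r • v)).2) 0 = (H s).2 := by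
      intro s
      have h1 := hcurve_r (s, 0)
      have h2 := ((ContinuousLinearMap.snd ℝ M V).hasFDerivAt).comp_hasDerivAt 0 h1
      exact h2.deriv
    have hF0 : ∀ s : ℝ, F (s, 0) = φ s (a, b) := by
      intro s; simp [hFdef]
    -- rewrite the function whose derivative we take
    have hfun : (fun s => fibreDerivSelf (φ s) (a, b, v))
        = fun s => (((F (s, 0)).1, (F (s, 0)).2, (H s).2) : M × V × V) := by
      funext s
      show ((φ s (a, b)).1, (φ s (a, b)).2, deriv (fun r : ℝ => (φ s (a, b + r • v)).2) 0)
          = ((F (s, 0)).1, (F (s, 0)).2, (H s).2)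
      rw [hthird s, hF0 s]
    -- derivative of the first two components
    have h1 : HasDerivAt (fun s => F (s, 0)) (Y (F (t, 0))) t := by
      have h := hcurve_s (t, 0)
      rwa [hDs (t, 0)] at h
    have hA1 : HasDerivAt (fun s => (F (s, 0)).1) (Y (F (t, 0))).1 t :=
      ((ContinuousLinearMap.fst ℝ M V).hasFDerivAt).comp_hasDerivAt t h1
    have hA2 : HasDerivAt (fun s => (F (s, 0)).2) (Y (F (t, 0))).2 t :=
      ((ContinuousLinearMap.snd ℝ M V).hasFDerivAt).comp_hasDerivAt t h1
    have hA3 : HasDerivAt (fun s => (H s).2)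
        (fderiv ℝ Y (F (t, 0)) (((0 : M), (H t).2) : M × V)).2 t := by
      have h := ((ContinuousLinearMap.snd ℝ M V).hasFDerivAt).comp_hasDerivAt t (hH' t)
      rw [hHt] at h
      exact h
    -- target value
    have htarget : fibreDerivSelf Y (fibreDerivSelf (φ t) (a, b, v))
        = ((Y (F (t, 0))).1, (Y (F (t, 0))).2,
            (fderiv ℝ Y (F (t, 0)) (((0 : M), (H t).2) : M × V)).2) := by
      have hfd : fibreDerivSelf (φ t) (a, b, v) = ((F (t, 0)).1, (F (t, 0)).2, (H t).2) := by
        have := congrFun hfun t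
        exact this
      rw [hfd]
      show ((Y ((F (t, 0)).1, (F (t, 0)).2)).1, (Y ((F (t, 0)).1, (F (t, 0)).2)).2,
          deriv (fun r : ℝ => (Y ((F (t, 0)).1, (F (t, 0)).2 + r • (H t).2)).2) 0) = _
      rw [aux_line_deriv Y hYd ((F (t, 0)).1) ((F (t, 0)).2) ((H t).2)]
    rw [hfun, htarget]
    exact hA1.prodMk (hA2.prodMk hA3)

end FD
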